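/- arXiv:2105.01571 — 3 statements merged into one kernel-verified Lean document; each statement's English description precedes it below -/
import Mathlib

section
/- For z ∈ ℝⁿ, if v* ≥ 0 satisfies ∑ᵢ min(1, max(0, zᵢ − v*)) = K, then the vector s with sᵢ = min(1, max(0, zᵢ − v*)) is the Euclidean projection of z onto C = {s ∈ [0,1]ⁿ : ∑ᵢ sᵢ ≤ K}, i.e., s ∈ C and ‖z − s‖₂ ≤ ‖z − s'‖₂ for all s' ∈ C. -/
theorem projection_formula_boundary_case
    (n : ℕ) (K : ℝ) (hK : 0 < K) (z : EuclideanSpace ℝ (Fin n))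
    (v : ℝ) (hv : 0 ≤ v)
    (hsum : (∑ i, min 1 (max 0 (z i - v))) = K)
    (s : EuclideanSpace ℝ (Fin n))
    (hs : ∀ i, s i = min 1 (max 0 (z i - v))) :
    (s ∈ {x : EuclideanSpace ℝ (Fin n) | (∀ i, 0 ≤ x i ∧ x i ≤ 1) ∧ (∑ i, x i) ≤ K}) ∧
    ∀ s' ∈ {x : EuclideanSpace ℝ (Fin n) | (∀ i, 0 ≤ x i ∧ x i ≤ 1) ∧ (∑ i, x i) ≤ K},
      ‖z - s‖ ≤ ‖z - s'‖ := by
  have hsumS : (∑ i, s i) = K := by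
    rw [← hsum]; exact Finset.sum_congr rfl fun i _ => hs i
  have hmem : s ∈ {x : EuclideanSpace ℝ (Fin n) |
      (∀ i, 0 ≤ x i ∧ x i ≤ 1) ∧ (∑ i, x i) ≤ K} := by
    refine ⟨fun i => ?_, le_of_eq hsumS⟩
    rw [hs i]
    constructor
    · exact le_min zero_le_one (le_max_left 0 _)
    · exact min_le_left _ _
  refine ⟨hmem, fun s' hs' => ?_⟩
  obtain ⟨hbox, hsumle⟩ := hs'
  -- key variational inequality
  have hterm : ∀ i, (z i - s i) * (s' i - s i) ≤ v * (s' i - s i) := by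
    intro i
    obtain ⟨h0, h1⟩ := hbox i
    rw [hs i]
    rcases le_or_gt (z i - v) 0 with hle | hgt
    · rw [max_eq_left hle, min_eq_right (zero_le_one' ℝ)]
      nlinarith
    · rw [max_eq_right hgt.le]
      rcases le_or_gt 1 (z i - v) with h1' | h1'
      · rw [min_eq_left h1']
        nlinarith
      · rw [min_eq_right h1'.le]
        nlinarith
  have hinner : inner ℝ (z - s) (s' - s) ≤ (0 : ℝ) := by
    have : inner ℝ (z - s) (s' - s) = ∑ i, (z i - s i) * (s' i - s i) := by
      rw [PiLp.inner_apply]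
      refine Finset.sum_congr rfl fun i _ => ?_
      simp [PiLp.sub_apply, RCLike.inner_apply, mul_comm]
    rw [this]
    calc (∑ i, (z i - s i) * (s' i - s i)) ≤ ∑ i, v * (s' i - s i) :=
          Finset.sum_le_sum fun i _ => hterm i
      _ = v * ((∑ i, s' i) - K) := by
          rw [← Finset.mul_sum, Finset.sum_sub_distrib, hsumS]
      _ ≤ 0 := mul_nonpos_of_nonneg_of_nonpos hv (by linarith)
  have hsq : ‖z - s‖ ^ 2 ≤ ‖z - s'‖ ^ 2 := by
    have hid : z - s' = (z - s) - (s' - s) := by abel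
    have hexp := norm_sub_sq_real (z - s) (s' - s)
    rw [hid]
    nlinarith [sq_nonneg ‖s' - s‖]
  have h1 := norm_nonneg (z - s)
  have h2 := norm_nonneg (z - s')
  nlinarith
end

section
/- For s ∈ (0,1) and independent standard Gumbel g₀, g₁, the random variable m = 1(log(s/(1−s)) + g₁ − g₀ ≥ 0) has the same distribution as a Bernoulli(s) random variable, i.e., it takes value 1 with probability s and 0 with probability 1 − s. -/
open MeasureTheory ProbabilityTheory Real

open Set Filter Topology

/-- Gumbel-type density with scale `a`. -/
noncomputable def gumDens (a y : ℝ) : ℝ := a * exp (-y) * exp (-(a * exp (-y)))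

lemma gumDens_nonneg (a : ℝ) (ha : 0 < a) (y : ℝ) : 0 ≤ gumDens a y := by
  unfold gumDens; positivity

lemma gumDens_deriv (a : ℝ) (y : ℝ) :
    HasDerivAt (fun y => exp (-(a * exp (-y)))) (gumDens a y) y := by
  have h1 : HasDerivAt (fun y : ℝ => -y) (-1) y := (hasDerivAt_id y).neg
  have h2 : HasDerivAt (fun y : ℝ => exp (-y)) (exp (-y) * (-1)) y := h1.exp
  have h3 : HasDerivAt (fun y : ℝ => -(a * exp (-y))) (-(a * (exp (-y) * (-1)))) y :=
    (h2.const_mul a).neg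
  have h4 := h3.exp
  convert h4 using 1
  unfold gumDens; ring

lemma gumDens_le (a : ℝ) (ha : 0 < a) (y : ℝ) :
    gumDens a y ≤ 27 / a ^ 2 * (exp y * exp y) := by
  set u := exp (-y) with hu
  have hu0 : 0 < u := exp_pos _
  have key : (a * u / 3) ^ 3 ≤ exp (a * u) := by
    have h1 : a * u / 3 ≤ exp (a * u / 3) := le_trans (by linarith [add_one_le_exp (a*u/3)]) le_rfl
    calc (a * u / 3) ^ 3 ≤ (exp (a * u / 3)) ^ 3 := by
          apply pow_le_pow_left₀ (by positivity) h1
      _ = exp (a * u) := by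
          rw [← Real.exp_nat_mul (a*u/3) 3]; congr 1; push_cast; ring
  have hgy : gumDens a y = a * u * exp (-(a * u)) := rfl
  have heu : exp y = 1 / u := by
    rw [hu, one_div, ← Real.exp_neg]; simp
  rw [hgy, heu]
  have h27 : (a * u / 3)^3 = a^3 * u^3 / 27 := by ring
  have hub : exp (-(a * u)) ≤ 27 / (a^3 * u^3) := by
    rw [Real.exp_neg, inv_eq_one_div, div_le_div_iff₀ (exp_pos _) (by positivity)]
    nlinarith [key, exp_pos (a*u)]
  calc a * u * exp (-(a * u)) ≤ a * u * (27 / (a^3 * u^3)) := by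
        apply mul_le_mul_of_nonneg_left hub (by positivity)
    _ = 27 / a^2 * (1/u * (1/u)) := by field_simp

lemma gumDens_continuous (a : ℝ) : Continuous (gumDens a) := by
  unfold gumDens; continuity

lemma gumDens_integrableOn (a : ℝ) (ha : 0 < a) (x : ℝ) :
    IntegrableOn (gumDens a) (Iic x) := by
  apply Integrable.mono' (g := fun y => (27 / a ^ 2 * exp x) * exp y)
    (((integrableOn_exp_Iic x).const_mul _))
    ((gumDens_continuous a).aestronglyMeasurable.restrict)
  filter_upwards [ae_restrict_mem measurableSet_Iic] with y hy
  rw [Real.norm_of_nonneg (gumDens_nonneg a ha y)]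
  calc gumDens a y ≤ 27 / a ^ 2 * (exp y * exp y) := gumDens_le a ha y
    _ ≤ 27 / a ^ 2 * (exp x * exp y) := by
        apply mul_le_mul_of_nonneg_left _ (by positivity)
        exact mul_le_mul_of_nonneg_right (exp_le_exp.2 hy) (exp_pos y).le
    _ = 27 / a ^ 2 * exp x * exp y := by ring

lemma gumDens_tendsto_bot (a : ℝ) (ha : 0 < a) :
    Tendsto (fun y => exp (-(a * exp (-y)))) atBot (𝓝 0) := by
  apply Real.tendsto_exp_atBot.comp
  apply tendsto_neg_atBot_iff.2
  exact (tendsto_exp_atTop.comp tendsto_neg_atBot_atTop).const_mul_atTop ha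

lemma gumDens_integral_Iic (a : ℝ) (ha : 0 < a) (x : ℝ) :
    ∫ y in Iic x, gumDens a y = exp (-(a * exp (-x))) := by
  have := integral_Iic_of_hasDerivAt_of_tendsto' (a := x)
    (f := fun y => exp (-(a * exp (-y)))) (f' := gumDens a)
    (fun y _ => gumDens_deriv a y) (gumDens_integrableOn a ha x)
    (gumDens_tendsto_bot a ha)
  rw [this, sub_zero]

lemma gumDens_lintegral_Iic (a : ℝ) (ha : 0 < a) (x : ℝ) :
    ∫⁻ y in Iic x, ENNReal.ofReal (gumDens a y) = ENNReal.ofReal (exp (-(a * exp (-x)))) := by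
  rw [← ofReal_integral_eq_lintegral_ofReal (gumDens_integrableOn a ha x)
    (Filter.Eventually.of_forall (gumDens_nonneg a ha)), gumDens_integral_Iic a ha x]

/-- The Gumbel-type measure with scale `a`. -/
noncomputable def gumMeasure (a : ℝ) : Measure ℝ :=
  MeasureTheory.volume.withDensity (fun y => ENNReal.ofReal (gumDens a y))

lemma gumMeasure_Iic (a : ℝ) (ha : 0 < a) (x : ℝ) :
    gumMeasure a (Iic x) = ENNReal.ofReal (exp (-(a * exp (-x)))) := by
  rw [gumMeasure, withDensity_apply _ measurableSet_Iic, gumDens_lintegral_Iic a ha x]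

lemma gumMeasure_univ (a : ℝ) (ha : 0 < a) : gumMeasure a Set.univ = 1 := by
  have h1 : Tendsto (fun x => gumMeasure a (Iic x)) atTop (𝓝 (gumMeasure a Set.univ)) :=
    tendsto_measure_Iic_atTop _
  have h2 : Tendsto (fun x : ℝ => gumMeasure a (Iic x)) atTop (𝓝 1) := by
    have hr : Tendsto (fun x : ℝ => exp (-(a * exp (-x)))) atTop (𝓝 1) := by
      have : Tendsto (fun x : ℝ => -(a * exp (-x))) atTop (𝓝 (-(a * 0))) := by
        exact ((tendsto_exp_atBot.comp tendsto_neg_atTop_atBot).const_mul a).neg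
      have h := Real.continuous_exp.continuousAt.tendsto.comp (by simpa using this :
        Tendsto (fun x : ℝ => -(a * exp (-x))) atTop (𝓝 0))
      simpa [Function.comp_def] using h
    have := (ENNReal.continuous_ofReal.continuousAt.tendsto.comp hr)
    simp only [ENNReal.ofReal_one] at this
    exact Tendsto.congr (fun x => (gumMeasure_Iic a ha x).symm) this
  exact tendsto_nhds_unique h1 h2

lemma gumDens_lintegral_total (a : ℝ) (ha : 0 < a) :
    ∫⁻ y, ENNReal.ofReal (gumDens a y) = 1 := by
  have h := gumMeasure_univ a ha
  rwa [gumMeasure, withDensity_apply _ MeasurableSet.univ, Measure.restrict_univ] at h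


theorem gumbel_indicator_is_bernoulli
    {Ω : Type*} [MeasurableSpace Ω] (μ : Measure Ω) [IsProbabilityMeasure μ]
    (s : ℝ) (hs : 0 < s) (hs1 : s < 1)
    (g₀ g₁ : Ω → ℝ) (hm₀ : Measurable g₀) (hm₁ : Measurable g₁)
    (hindep : IndepFun g₀ g₁ μ)
    (hg₀ : ∀ x : ℝ, μ {ω | g₀ ω ≤ x} = ENNReal.ofReal (exp (-exp (-x))))
    (hg₁ : ∀ x : ℝ, μ {ω | g₁ ω ≤ x} = ENNReal.ofReal (exp (-exp (-x))))
    (m : Ω → ℝ)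
    (hm : ∀ ω, m ω = if 0 ≤ Real.log (s / (1 - s)) + g₁ ω - g₀ ω then 1 else 0) :
    μ {ω | m ω = 1} = ENNReal.ofReal s ∧ μ {ω | m ω = 0} = ENNReal.ofReal (1 - s) := by
  set c := Real.log (s / (1 - s)) with hc
  have hs1' : 0 < 1 - s := by linarith
  have hec : exp (-c) = (1 - s) / s := by
    have h1 : exp (-c) = (s / (1 - s))⁻¹ := by
      rw [hc, ← Real.log_inv, Real.exp_log (by positivity)]
    rw [h1, inv_div]
  -- the set {m = 1}
  have hS1 : {ω | m ω = 1} = {ω | g₀ ω ≤ c + g₁ ω} := by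
    ext ω
    rw [mem_setOf_eq, mem_setOf_eq, hm ω]
    split_ifs with h
    · constructor
      · intro _; linarith
      · intro _; rfl
    · constructor
      · intro h0; norm_num at h0
      · intro hle; exfalso; exact h (by linarith)
  have hmeasS : MeasurableSet {ω | g₀ ω ≤ c + g₁ ω} :=
    measurableSet_le hm₀ (measurable_const.add hm₁)
  -- the map of the pair is a product measure
  have hmap : μ.map (fun ω => (g₁ ω, g₀ ω)) = (μ.map g₁).prod (μ.map g₀) :=
    (indepFun_iff_map_prod_eq_prod_map_map hm₁.aemeasurable hm₀.aemeasurable).1 hindep.symm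
  have hT : MeasurableSet {p : ℝ × ℝ | p.2 ≤ c + p.1} :=
    measurableSet_le measurable_snd (measurable_const.add measurable_fst)
  -- identify the law of g₁ with the Gumbel measure
  haveI : IsProbabilityMeasure (μ.map g₁) := Measure.isProbabilityMeasure_map hm₁.aemeasurable
  have hlaw : μ.map g₁ = gumMeasure 1 := by
    refine Measure.ext_of_Iic (μ.map g₁) (gumMeasure 1) (fun x => ?_)
    rw [Measure.map_apply hm₁ measurableSet_Iic, gumMeasure_Iic 1 one_pos]
    simp only [one_mul]
    exact hg₁ x
  -- compute μ {m = 1}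
  have hkey : ∀ y : ℝ, gumDens 1 y * exp (-exp (-(c + y))) = s * gumDens (1/s) y := by
    intro y
    unfold gumDens
    have h1 : exp (-(c + y)) = exp (-c) * exp (-y) := by
      rw [← Real.exp_add]; ring_nf
    rw [h1, hec]
    simp only [one_mul]
    rw [mul_assoc, ← Real.exp_add]
    have h2 : -exp (-y) + -((1 - s) / s * exp (-y)) = -(1/s * exp (-y)) := by
      field_simp; ring
    rw [h2]
    field_simp
  have hmain : μ {ω | g₀ ω ≤ c + g₁ ω} = ENNReal.ofReal s := by
    have hpre : {ω | g₀ ω ≤ c + g₁ ω}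
        = (fun ω => (g₁ ω, g₀ ω)) ⁻¹' {p : ℝ × ℝ | p.2 ≤ c + p.1} := rfl
    rw [hpre, ← Measure.map_apply (hm₁.prodMk hm₀) hT, hmap, Measure.prod_apply hT]
    have hslice : ∀ y : ℝ, (μ.map g₀) (Prod.mk y ⁻¹' {p : ℝ × ℝ | p.2 ≤ c + p.1})
        = ENNReal.ofReal (exp (-exp (-(c + y)))) := by
      intro y
      have : (Prod.mk y ⁻¹' {p : ℝ × ℝ | p.2 ≤ c + p.1}) = Iic (c + y) := rfl
      rw [this, Measure.map_apply hm₀ measurableSet_Iic]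
      exact hg₀ (c + y)
    rw [lintegral_congr hslice, hlaw, gumMeasure,
      lintegral_withDensity_eq_lintegral_mul _
        ((gumDens_continuous 1).measurable.ennreal_ofReal)
        (show Measurable fun y : ℝ => ENNReal.ofReal (exp (-exp (-(c + y)))) from (((continuous_add_left c).neg.rexp.neg.rexp) :
          Continuous fun y : ℝ => exp (-exp (-(c + y)))).measurable.ennreal_ofReal)]
    have heq : ∀ y : ℝ,
        ((fun y => ENNReal.ofReal (gumDens 1 y)) * fun y => ENNReal.ofReal (exp (-exp (-(c + y))))) y
        = ENNReal.ofReal s * ENNReal.ofReal (gumDens (1/s) y) := by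
      intro y
      simp only [Pi.mul_apply]
      rw [← ENNReal.ofReal_mul (gumDens_nonneg 1 one_pos y), hkey y,
        ENNReal.ofReal_mul hs.le]
    rw [lintegral_congr heq, lintegral_const_mul _
      ((gumDens_continuous (1/s)).measurable.ennreal_ofReal),
      gumDens_lintegral_total (1/s) (by positivity), mul_one]
  have h1 : μ {ω | m ω = 1} = ENNReal.ofReal s := by rw [hS1]; exact hmain
  refine ⟨h1, ?_⟩
  have hS0 : {ω | m ω = 0} = {ω | m ω = 1}ᶜ := by
    ext ω
    simp only [mem_compl_iff, mem_setOf_eq, hm ω]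
    split_ifs <;> norm_num
  rw [hS0, measure_compl (hS1 ▸ hmeasS) (measure_ne_top μ _), measure_univ, h1,
    ← ENNReal.ofReal_one, ← ENNReal.ofReal_sub _ hs.le]
end

section
/- Let z ∈ ℝⁿ, v* ≥ 0, and s with sᵢ = min(1, max(0, zᵢ − v*)). Then for every s' ∈ [0,1]ⁿ with ∑ᵢ s'ᵢ ≤ K, assuming either v* = 0 or ∑ᵢ sᵢ = K, one has ∑ᵢ (zᵢ − sᵢ)(s'ᵢ − sᵢ) ≤ 0. -/
theorem variational_inequality_verification
    (n : ℕ) (K : ℝ) (z : Fin n → ℝ) (v : ℝ) (hv : 0 ≤ v)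
    (s : Fin n → ℝ) (hs : ∀ i, s i = min 1 (max 0 (z i - v)))
    (hslack : v = 0 ∨ (∑ i, s i) = K) :
    ∀ s' : Fin n → ℝ, (∀ i, 0 ≤ s' i ∧ s' i ≤ 1) → (∑ i, s' i) ≤ K →
      (∑ i, (z i - s i) * (s' i - s i)) ≤ 0 := by
  intro s' hs' hK
  have key : ∀ i, (z i - s i) * (s' i - s i) ≤ v * (s' i - s i) := by
    intro i
    obtain ⟨h0, h1⟩ := hs' i
    have hsi := hs i
    rcases le_or_gt (z i - v) 0 with ha | ha
    · have : s i = 0 := by rw [hsi]; simp [max_eq_left ha]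
      rw [this]; nlinarith
    · rcases le_or_gt 1 (z i - v) with hb | hb
      · have : s i = 1 := by rw [hsi, max_eq_right ha.le, min_eq_left hb]
        rw [this]; nlinarith
      · have : s i = z i - v := by rw [hsi, max_eq_right ha.le, min_eq_right hb.le]
        rw [this]; nlinarith
  calc (∑ i, (z i - s i) * (s' i - s i)) ≤ ∑ i, v * (s' i - s i) :=
        Finset.sum_le_sum (fun i _ => key i)
    _ = v * ((∑ i, s' i) - ∑ i, s i) := by
        rw [← Finset.mul_sum]
        rw [mul_sub, Finset.sum_sub_distrib] ; ring_nf
    _ ≤ 0 := by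
        rcases hslack with h | h
        · simp [h]
        · rw [h]; nlinarith
end
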